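/- Let (G,τ,∂) be a Polish topometric group with the Steinhaus property (with some exponent k) and let H be a second-countable topological group. If φ : G → H is a group homomorphism that is continuous from (G,∂) to H, then φ is continuous from (G,τ) to H. -/

import Mathlib

open Pointwise

/-- The open `ε`-enlargement of `A ⊆ G` with respect to the distance `D`. -/
def enclG {G : Type*} (D : G → G → ℝ) (ε : ℝ) (A : Set G) : Set G :=
  {g | ∃ b ∈ A, D g b < ε}

/-- `A` is σ-syndetic: countably many left translates of `A` cover `G`. -/
def SigmaSyndetic {G : Type*} [Group G] (A : Set G) : Prop :=
  ∃ t : ℕ → G, (⋃ n : ℕ, t n • A) = Set.univ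

/-- The sup metric on tuples induced by `D`. -/
noncomputable def supMetG {G : Type*} (D : G → G → ℝ) {n : ℕ} (x y : Fin n → G) : ℝ :=
  ⨆ i : Fin n, D (x i) (y i)

/-- `(G,τ,D)` is Steinhaus with exponent `k`: for every symmetric σ-syndetic `A` and
`ε > 0`, the identity lies in the interior of `(A^k)_ε`. -/
def SteinhausWith {G : Type*} [Group G] [TopologicalSpace G] (D : G → G → ℝ)
    (k : ℕ) : Prop :=
  ∀ A : Set G, A⁻¹ = A → SigmaSyndetic A →
    ∀ ε > (0 : ℝ), (1 : G) ∈ interior (enclG D ε (A ^ k))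

/-- The topometric group `(G,τ,D)` has ample generics: for every `n` and `ε > 0` some
tuple in `Gⁿ` has a diagonal conjugacy class whose `ε`-enlargement is comeagre. -/
def AmpleGenerics {G : Type*} [Group G] [TopologicalSpace G] (D : G → G → ℝ) : Prop :=
  ∀ n : ℕ, ∀ ε > (0 : ℝ), ∃ g : Fin n → G,
    {f : Fin n → G | ∃ k : G, supMetG D f (fun i => k * g i * k⁻¹) < ε}
      ∈ residual (Fin n → G)


lemma aux_symm_pow {H : Type*} [Group H] [TopologicalSpace H] [IsTopologicalGroup H] :
    ∀ (n : ℕ) (W : Set H), W ∈ nhds 1 → ∃ V : Set H, IsOpen V ∧ (1:H) ∈ V ∧ V⁻¹ = V ∧ V ^ n ⊆ W := by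
  intro n
  induction n with
  | zero =>
    intro W hW
    refine ⟨Set.univ, isOpen_univ, trivial, Set.inv_univ, ?_⟩
    rw [pow_zero]
    exact Set.one_subset.2 (mem_of_mem_nhds hW)
  | succ n ih =>
    intro W hW
    obtain ⟨U, hUo, hU1, hUU⟩ := exists_open_nhds_one_mul_subset hW
    obtain ⟨V₁, hV₁o, hV₁1, _, hV₁n⟩ := ih U (hUo.mem_nhds hU1)
    refine ⟨(V₁ ∩ U) ∩ (V₁ ∩ U)⁻¹, ((hV₁o.inter hUo).inter (hV₁o.inter hUo).inv), ⟨⟨hV₁1, hU1⟩, by simp [hV₁1, hU1]⟩, ?_, ?_⟩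
    · rw [Set.inter_inv, inv_inv, Set.inter_comm]
    · rw [pow_succ]
      intro x hx
      obtain ⟨a, ha, b, hb, rfl⟩ := hx
      have ha' : a ∈ V₁ ^ n := Set.pow_subset_pow_left (fun y hy => hy.1.1) ha
      exact hUU (Set.mul_mem_mul (hV₁n ha') hb.1.2)

lemma aux_preimage_pow {G H : Type*} [Group G] [Group H] (φ : G →* H) (S : Set H) :
    ∀ (n : ℕ) (b : G), b ∈ (φ ⁻¹' S) ^ n → φ b ∈ S ^ n := by
  intro n
  induction n with
  | zero => intro b hb; rw [pow_zero] at hb ⊢; simp_all [Set.mem_one]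
  | succ n ih =>
    intro b hb
    rw [pow_succ] at hb ⊢
    obtain ⟨x, hx, y, hy, rfl⟩ := hb
    rw [map_mul]
    exact Set.mul_mem_mul (ih x hx) hy


/-- If a Polish topometric group `(G,τ,D)` has the Steinhaus property (with
some exponent `k`) and `H` is a second-countable topological group, then any group
homomorphism `φ : G → H` which is continuous from `(G,D)` to `H` is `τ`-continuous. -/
theorem stmt_8
    {G : Type*} [Group G] [TopologicalSpace G] [IsTopologicalGroup G] [PolishSpace G]
    (D : G → G → ℝ)
    (hD_eq : ∀ g h : G, D g h = 0 ↔ g = h)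
    (hD_symm : ∀ g h : G, D g h = D h g)
    (hD_tri : ∀ g h k : G, D g k ≤ D g h + D h k)
    (hD_bi : ∀ g h k : G, D (k * g) (k * h) = D g h ∧ D (g * k) (h * k) = D g h)
    (hD_ref : ∀ U : Set G, IsOpen U → ∀ g ∈ U, ∃ ε > (0 : ℝ), {h | D g h < ε} ⊆ U)
    (hD_lsc : ∀ r : ℝ, IsClosed {p : G × G | D p.1 p.2 ≤ r})
    (hSt : ∃ k : ℕ, SteinhausWith D k)
    {H : Type*} [Group H] [TopologicalSpace H] [IsTopologicalGroup H]
    [SecondCountableTopology H]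
    (φ : G →* H)
    (hφD : ∀ g : G, ∀ W ∈ nhds (φ g), ∃ ε > (0 : ℝ), ∀ h : G, D g h < ε → φ h ∈ W) :
    Continuous φ := by
  obtain ⟨k, hk⟩ := hSt
  unfold SteinhausWith SigmaSyndetic enclG at hk
  apply continuous_of_continuousAt_one φ
  rw [ContinuousAt, map_one, Filter.tendsto_def]
  intro W hW
  -- symmetric open V with V^(2k+1) ⊆ W
  obtain ⟨V, hVo, hV1, hVsymm, hVpow⟩ := aux_symm_pow (2 * k + 1) W hW
  -- ε-continuity of φ at 1 for target V
  have hV1' : V ∈ nhds (φ 1) := by rw [map_one]; exact hVo.mem_nhds hV1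
  obtain ⟨ε, hε, hφ1⟩ := hφD 1 V hV1'
  set A : Set G := φ ⁻¹' (V * V) with hA
  have hVVsymm : (V * V)⁻¹ = V * V := by
    rw [mul_inv_rev, hVsymm]
  have hAsymm : A⁻¹ = A := by
    ext g
    simp only [Set.mem_inv, hA, Set.mem_preimage, map_inv]
    rw [← Set.mem_inv (s := V * V), hVVsymm]
  have hAsynd : ∃ t : ℕ → G, (⋃ n : ℕ, t n • A) = Set.univ := by
    obtain ⟨c, hc_count, hc_dense⟩ := TopologicalSpace.exists_countable_dense H
    have hc_ne : c.Nonempty := hc_dense.nonempty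
    obtain ⟨f, hf⟩ := hc_count.exists_eq_range hc_ne
    classical
    refine ⟨fun n => if h : ∃ g : G, φ g ∈ f n • V then Classical.choose h else 1, ?_⟩
    rw [Set.eq_univ_iff_forall]
    intro g
    -- find a point of c in φ g • V
    have hopen : IsOpen (φ g • V) := hVo.smul (φ g)
    have hne : (φ g • V).Nonempty := ⟨φ g, ⟨1, hV1, mul_one _⟩⟩
    obtain ⟨x, hxc, hxV⟩ := hc_dense.exists_mem_open hopen hne
    rw [hf] at hxc
    obtain ⟨n, rfl⟩ := hxc
    obtain ⟨v, hv, hxv⟩ := hxV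
    -- φ g ∈ f n • V
    have hxv' : φ g * v = f n := hxv
    have hgmem : φ g ∈ f n • V := by
      refine ⟨v⁻¹, by rw [← hVsymm]; exact Set.inv_mem_inv.2 hv, ?_⟩
      show f n * v⁻¹ = φ g
      rw [← hxv']; group
    have hex : ∃ g' : G, φ g' ∈ f n • V := ⟨g, hgmem⟩
    refine Set.mem_iUnion.2 ⟨n, ?_⟩
    simp only [dif_pos hex]
    set t := Classical.choose hex with ht
    have htV : φ t ∈ f n • V := Classical.choose_spec hex
    obtain ⟨u, hu, htu⟩ := htV
    have htu' : f n * u = φ t := htu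
    refine ⟨t⁻¹ * g, ?_, by show t * (t⁻¹ * g) = g; group⟩
    show φ (t⁻¹ * g) ∈ V * V
    have heq : φ (t⁻¹ * g) = u⁻¹ * v⁻¹ := by
      rw [map_mul, map_inv, ← htu', ← hxv']
      group
    rw [heq]
    exact Set.mul_mem_mul (by rw [← hVsymm]; exact Set.inv_mem_inv.2 hu)
      (by rw [← hVsymm]; exact Set.inv_mem_inv.2 hv)
  have hint := hk A hAsymm hAsynd ε hε
  have hsub : {g | ∃ b ∈ A ^ k, D g b < ε} ⊆ φ ⁻¹' W := by
    rintro g ⟨b, hb, hgb⟩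
    have hφb : φ b ∈ (V * V) ^ k := aux_preimage_pow φ (V * V) k b hb
    have hφb' : φ b ∈ V ^ (2 * k) := by
      rwa [← sq, ← pow_mul] at hφb
    have hD1 : D 1 (b⁻¹ * g) < ε := by
      have h1 := (hD_bi g b b⁻¹).1
      rw [inv_mul_cancel] at h1
      rw [hD_symm, h1]
      exact hgb
    have hφbg : φ (b⁻¹ * g) ∈ V := hφ1 _ hD1
    have : φ g = φ b * φ (b⁻¹ * g) := by rw [← map_mul]; group
    rw [Set.mem_preimage, this]
    exact hVpow (by rw [pow_succ]; exact Set.mul_mem_mul hφb' hφbg)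
  exact mem_interior_iff_mem_nhds.1 (interior_mono hsub hint)
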